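/- Let P = {x_1 < x_2 < ... < x_q} ⊂ [0,1] be a cycle of a map f (i.e., f permutes P cyclically), and suppose P can be partitioned into n consecutive blocks K_1 < K_2 < ... < K_n such that on each block K_i the restriction f|_{K_i} is monotone and maps consecutive points of K_i to consecutive points of f(K_i), with exactly k of the blocks on which f is decreasing. Then there exists an (n,k)-interval exchange transformation T : [0,1] → [0,1] and a periodic orbit Q of T such that f|_P is conjugate to T|_Q via an order-preserving bijection. -/

import Mathlib

/-- An `(n,k)`-interval exchange transformation of `[0,1]`: a map that is
piecewise affine with slope `±1` on `n` subintervals determined by a partition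
`0 = z₀ < z₁ < … < zₙ = 1`, exactly `k` of which carry slope `-1`. -/
def IsIET (n k : ℕ) (T : ℝ → ℝ) : Prop :=
  ∃ (z : Fin (n + 1) → ℝ) (s : Fin n → Bool),
    StrictMono z ∧ z 0 = 0 ∧ z (Fin.last n) = 1 ∧
    Set.MapsTo T (Set.Ico 0 1) (Set.Icc 0 1) ∧
    (Finset.univ.filter fun i : Fin n => s i = true).card = k ∧
    ∀ i : Fin n, ∃ c : ℝ, ∀ y ∈ Set.Ico (z i.castSucc) (z i.succ),
      T y = (if s i then -y else y) + c

/-- If a cycle `P = {x_1 < … < x_q} ⊂ [0,1]` of `f` splits into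
`n` consecutive blocks on each of which `f` is monotone and maps consecutive
points to consecutive points, with exactly `k` decreasing blocks, then `f|_P`
is conjugate, via an order-preserving bijection, to an `(n,k)`-IET restricted
to one of its periodic orbits. -/
theorem cycle_blocks_conjugate_to_IET
    (q n k : ℕ) (hq : 0 < q)
    (x : ℕ → ℝ)
    (hxmono : ∀ i j, 1 ≤ i → i < j → j ≤ q → x i < x j)
    (hxmem : ∀ i ∈ Set.Icc 1 q, x i ∈ Set.Icc (0 : ℝ) 1)
    (f : ℝ → ℝ) (σ : ℕ → ℕ)
    (hσ : Set.BijOn σ (Set.Icc 1 q) (Set.Icc 1 q))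
    (hfx : ∀ i ∈ Set.Icc 1 q, f (x i) = x (σ i))
    (hcyc : ∀ i ∈ Set.Icc 1 q, ∀ j ∈ Set.Icc 1 q, ∃ m : ℕ, σ^[m] i = j)
    (e : ℕ → ℕ) (he : ∀ i j, i < j → j ≤ n → e i < e j)
    (he0 : e 0 = 0) (hen : e n = q)
    (d : ℕ → Bool)
    (hk : ((Finset.range n).filter fun b => d b = true).card = k)
    (hstep : ∀ b < n, ∀ j, e b < j → j + 1 ≤ e (b + 1) →
      if d b then (σ j : ℤ) = (σ (j + 1) : ℤ) + 1
      else (σ (j + 1) : ℤ) = (σ j : ℤ) + 1) :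
    ∃ T : ℝ → ℝ, IsIET n k T ∧
      ∃ y : ℕ → ℝ,
        (∀ i j, 1 ≤ i → i < j → j ≤ q → y i < y j) ∧
        (∀ i ∈ Set.Icc 1 q, y i ∈ Set.Icc (0 : ℝ) 1) ∧
        (∀ i ∈ Set.Icc 1 q, T (y i) = y (σ i)) := by
  classical
  have hn : 0 < n := by
    rcases Nat.eq_zero_or_pos n with h | h
    · exfalso; rw [h, he0] at hen; omega
    · exact h
  have hqR : (0:ℝ) < q := by exact_mod_cast hq
  have heq : ∀ b, b ≤ n → e b ≤ q := by
    intro b hb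
    rcases eq_or_lt_of_le hb with rfl | h
    · omega
    · have := he b n h le_rfl; omega
  have hσmem : ∀ i, 1 ≤ i → i ≤ q → 1 ≤ σ i ∧ σ i ≤ q := by
    intro i h1 h2
    exact hσ.mapsTo ⟨h1, h2⟩
  -- the key block formula: σ is affine with slope ±1 on each block of indices
  have key : ∀ b, b < n → ∀ j, e b < j → j ≤ e (b+1) →
      (σ j : ℤ) = if d b then (σ (e b + 1) : ℤ) - ((j:ℤ) - ((e b : ℤ) + 1))
        else (σ (e b + 1) : ℤ) + ((j:ℤ) - ((e b : ℤ) + 1)) := by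
    intro b hb j
    induction j with
    | zero => intro h1 h2; omega
    | succ j ih =>
      intro h1 h2
      rcases Nat.lt_or_ge (e b) j with hj | hj
      · have h1' := ih hj (by omega)
        have hs := hstep b hb j hj h2
        split_ifs at h1' hs ⊢ with hd
        · push_cast at h1' ⊢; omega
        · push_cast at h1' ⊢; omega
      · have hjeq : j + 1 = e b + 1 := by omega
        rw [hjeq]
        split_ifs <;> push_cast <;> ring
  -- each index 1 ≤ i ≤ q lies in a unique block
  have hblock : ∀ i, 1 ≤ i → i ≤ q → ∃ b, b < n ∧ e b < i ∧ i ≤ e (b+1) := by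
    intro i h1 h2
    obtain ⟨b, hbn, hPb, hmax⟩ :
        ∃ b, b ≤ n ∧ e b < i ∧ ∀ m, m ≤ n → e m < i → m ≤ b := by
      refine ⟨Nat.findGreatest (fun b => e b < i) n, Nat.findGreatest_le n, ?_, ?_⟩
      · exact Nat.findGreatest_spec (P := fun b => e b < i) (Nat.zero_le n) (by omega)
      · intro m hm hPm
        exact Nat.le_findGreatest (P := fun b => e b < i) hm hPm
    have hblt : b < n := by
      rcases eq_or_lt_of_le hbn with h | h
      · subst h; omega
      · exact h
    refine ⟨b, hblt, hPb, ?_⟩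
    by_contra h
    push_neg at h
    have := hmax (b+1) (by omega) h
    omega
  -- each real point of [0,1) lies in a block
  have hblockR : ∀ y : ℝ, 0 ≤ y → y < 1 →
      ∃ b, b < n ∧ (e b : ℝ)/q ≤ y ∧ y < (e (b+1) : ℝ)/q := by
    intro y hy0 hy1
    obtain ⟨b, hbn, hPb, hmax⟩ :
        ∃ b, b ≤ n ∧ (e b : ℝ)/q ≤ y ∧ ∀ m, m ≤ n → (e m : ℝ)/q ≤ y → m ≤ b := by
      refine ⟨Nat.findGreatest (fun b => (e b : ℝ)/q ≤ y) n, Nat.findGreatest_le n, ?_, ?_⟩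
      · exact Nat.findGreatest_spec (P := fun b => (e b : ℝ)/q ≤ y) (Nat.zero_le n)
          (by show (e 0 : ℝ)/q ≤ y; rw [he0]; simpa using hy0)
      · intro m hm hPm
        exact Nat.le_findGreatest (P := fun b => (e b : ℝ)/q ≤ y) hm hPm
    have hblt : b < n := by
      rcases eq_or_lt_of_le hbn with h | h
      · exfalso
        rw [h, hen, div_self (ne_of_gt hqR)] at hPb
        linarith
      · exact h
    refine ⟨b, hblt, hPb, ?_⟩
    by_contra h
    push_neg at h
    have := hmax (b+1) (by omega) h
    omega
  -- monotonicity of the breakpoints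
  have hzmono : ∀ a a' : ℕ, a < a' → a' ≤ n → (e a : ℝ)/q < (e a' : ℝ)/q := by
    intro a a' h ha'
    have h2 := he a a' h ha'
    exact (div_lt_div_iff_of_pos_right hqR).mpr (by exact_mod_cast h2)
  have hzle : ∀ a a' : ℕ, a ≤ a' → a' ≤ n → (e a : ℝ)/q ≤ (e a' : ℝ)/q := by
    intro a a' h ha'
    rcases eq_or_lt_of_le h with rfl | h
    · exact le_refl _
    · exact (hzmono a a' h ha').le
  -- uniqueness of the block containing a real point
  have huniq : ∀ (y : ℝ) (b b' : ℕ), b < n → b' < n →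
      (e b : ℝ)/q ≤ y → y < (e (b+1) : ℝ)/q →
      (e b' : ℝ)/q ≤ y → y < (e (b'+1) : ℝ)/q → b = b' := by
    intro y b b' hb hb' h1 h2 h3 h4
    by_contra hne
    rcases Nat.lt_or_ge b b' with h | h
    · have := hzle (b+1) b' (by omega) (by omega)
      linarith
    · have hbb : b' < b := by omega
      have := hzle (b'+1) b (by omega) (by omega)
      linarith
  -- the constant on each block
  set c : ℕ → ℝ := fun b =>
    if d b then ((σ (e b + 1) : ℝ) + (e b : ℝ))/q
    else ((σ (e b + 1) : ℝ) - ((e b : ℝ) + 1))/q with hcdef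
  set T : ℝ → ℝ := fun y =>
    if h : ∃ b, b < n ∧ (e b : ℝ)/q ≤ y ∧ y < (e (b+1) : ℝ)/q then
      (if d h.choose then -y else y) + c h.choose
    else y with hTdef
  have hTval : ∀ b, b < n → ∀ y : ℝ, (e b : ℝ)/q ≤ y → y < (e (b+1) : ℝ)/q →
      T y = (if d b then -y else y) + c b := by
    intro b hb y h1 h2
    have hex : ∃ b, b < n ∧ (e b : ℝ)/q ≤ y ∧ y < (e (b+1) : ℝ)/q := ⟨b, hb, h1, h2⟩
    have hspec := hex.choose_spec
    have hbeq : hex.choose = b :=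
      huniq y hex.choose b hspec.1 hb hspec.2.1 hspec.2.2 h1 h2
    simp only [hTdef, dif_pos hex, hbeq]
  -- bounds for the values of σ at block endpoints
  have hσb : ∀ b, b < n → 1 ≤ σ (e b + 1) ∧ σ (e b + 1) ≤ q := by
    intro b hb
    have h1 : e b < e (b+1) := he b (b+1) (by omega) (by omega)
    have h2 : e (b+1) ≤ q := heq (b+1) (by omega)
    exact hσmem (e b + 1) (by omega) (by omega)
  have hσe : ∀ b, b < n → 1 ≤ σ (e (b+1)) ∧ σ (e (b+1)) ≤ q := by
    intro b hb
    have h1 : e b < e (b+1) := he b (b+1) (by omega) (by omega)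
    have h2 : e (b+1) ≤ q := heq (b+1) (by omega)
    exact hσmem (e (b+1)) (by omega) h2
  -- T maps each block into [0,1]
  have hmaps : ∀ b, b < n → ∀ y : ℝ, (e b : ℝ)/q ≤ y → y < (e (b+1) : ℝ)/q →
      T y ∈ Set.Icc (0:ℝ) 1 := by
    intro b hb y h1 h2
    rw [hTval b hb y h1 h2]
    have hkey := key b hb (e (b+1)) (he b (b+1) (by omega) (by omega)) le_rfl
    have hb1 := hσb b hb
    have he1 := hσe b hb
    split_ifs at hkey ⊢ with hd
    · -- decreasing block
      simp only [hcdef, if_pos hd]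
      constructor
      · have hnum : (e (b+1) : ℝ) ≤ (σ (e b + 1) : ℝ) + (e b : ℝ) := by
          have : (e (b+1) : ℤ) ≤ (σ (e b + 1) : ℤ) + (e b : ℤ) := by omega
          exact_mod_cast this
        have hE : (e (b+1) : ℝ)/q ≤ ((σ (e b + 1) : ℝ) + (e b : ℝ))/q :=
          (div_le_div_iff_of_pos_right hqR).mpr hnum
        linarith
      · have hC : ((σ (e b + 1) : ℝ) + (e b : ℝ))/q
            = (σ (e b + 1) : ℝ)/q + (e b : ℝ)/q := add_div _ _ _
        have hD : (σ (e b + 1) : ℝ)/q ≤ 1 := by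
          rw [div_le_one hqR]; exact_mod_cast hb1.2
        linarith
    · -- increasing block
      simp only [hcdef, if_neg hd]
      constructor
      · have hF : (e b : ℝ)/q + ((σ (e b + 1) : ℝ) - ((e b : ℝ) + 1))/q
            = ((σ (e b + 1) : ℝ) - 1)/q := by
          rw [← add_div]; ring_nf
        have hG : (0:ℝ) ≤ ((σ (e b + 1) : ℝ) - 1)/q := by
          apply div_nonneg _ hqR.le
          have : (1:ℝ) ≤ (σ (e b + 1) : ℝ) := by exact_mod_cast hb1.1
          linarith
        linarith
      · have hnum : (e (b+1) : ℝ) + ((σ (e b + 1) : ℝ) - ((e b : ℝ) + 1))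
            = (σ (e (b+1)) : ℝ) := by
          have : (e (b+1) : ℤ) + ((σ (e b + 1) : ℤ) - ((e b : ℤ) + 1))
              = (σ (e (b+1)) : ℤ) := by omega
          exact_mod_cast this
        have hH : (e (b+1) : ℝ)/q + ((σ (e b + 1) : ℝ) - ((e b : ℝ) + 1))/q
            = (σ (e (b+1)) : ℝ)/q := by
          rw [← add_div, hnum]
        have hI : (σ (e (b+1)) : ℝ)/q ≤ 1 := by
          rw [div_le_one hqR]; exact_mod_cast he1.2
        linarith
  -- the orbit points
  set Y : ℕ → ℝ := fun i => (2*(i:ℝ) - 1)/(2*q) with hYdef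
  have hYmono : ∀ i j, 1 ≤ i → i < j → j ≤ q → Y i < Y j := by
    intro i j h1 h2 h3
    apply (div_lt_div_iff_of_pos_right (by positivity)).mpr
    have : (i:ℝ) < j := by exact_mod_cast h2
    linarith
  have hYmem : ∀ i ∈ Set.Icc 1 q, Y i ∈ Set.Icc (0:ℝ) 1 := by
    intro i hi
    have h1 : (1:ℝ) ≤ i := by exact_mod_cast hi.1
    have h2 : (i:ℝ) ≤ q := by exact_mod_cast hi.2
    constructor
    · apply div_nonneg _ (by positivity)
      linarith
    · rw [div_le_one (by positivity)]
      linarith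
  -- each orbit point lies in the block of its index
  have hYin : ∀ i, 1 ≤ i → i ≤ q → ∀ b, b < n → e b < i → i ≤ e (b+1) →
      (e b : ℝ)/q ≤ Y i ∧ Y i < (e (b+1) : ℝ)/q := by
    intro i h1 h2 b hb hlo hhi
    have hloR : (e b : ℝ) + 1 ≤ (i:ℝ) := by exact_mod_cast hlo
    have hhiR : (i:ℝ) ≤ (e (b+1) : ℝ) := by exact_mod_cast hhi
    constructor
    · rw [div_le_div_iff₀ hqR (by positivity)]
      ring_nf
      nlinarith
    · rw [div_lt_div_iff₀ (by positivity) hqR]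
      nlinarith
  -- conjugacy on the orbit
  have hTY : ∀ i ∈ Set.Icc 1 q, T (Y i) = Y (σ i) := by
    intro i hi
    obtain ⟨b, hb, hlo, hhi⟩ := hblock i hi.1 hi.2
    obtain ⟨hA, hB⟩ := hYin i hi.1 hi.2 b hb hlo hhi
    rw [hTval b hb (Y i) hA hB]
    have hkey := key b hb i hlo hhi
    split_ifs at hkey ⊢ with hd
    · simp only [hcdef, if_pos hd, hYdef]
      have hkeyR : (σ i : ℝ) = (σ (e b + 1) : ℝ) - ((i:ℝ) - ((e b : ℝ) + 1)) := by
        exact_mod_cast hkey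
      field_simp
      linear_combination (-2) * hkeyR
    · simp only [hcdef, if_neg hd, hYdef]
      have hkeyR : (σ i : ℝ) = (σ (e b + 1) : ℝ) + ((i:ℝ) - ((e b : ℝ) + 1)) := by
        exact_mod_cast hkey
      field_simp
      linear_combination (-2) * hkeyR
  -- assemble everything
  refine ⟨T, ⟨fun i => (e (i : ℕ) : ℝ)/q, fun i => d (i : ℕ), ?_, ?_, ?_, ?_, ?_, ?_⟩,
    Y, hYmono, hYmem, hTY⟩
  · intro a a' haa
    exact hzmono a a' haa (Nat.lt_succ_iff.mp a'.isLt)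
  · simp [he0]
  · simp [Fin.last, hen, div_self (ne_of_gt hqR)]
  · intro y hy
    obtain ⟨b, hb, h1, h2⟩ := hblockR y hy.1 hy.2
    exact hmaps b hb y h1 h2
  · rw [← hk]
    apply Finset.card_bij (fun (i : Fin n) _ => (i : ℕ))
    · intro i hi
      simp only [Finset.mem_filter, Finset.mem_range, Finset.mem_univ] at hi ⊢
      exact ⟨i.isLt, hi.2⟩
    · intro a _ b _ hab
      exact Fin.ext hab
    · intro b hb
      simp only [Finset.mem_filter, Finset.mem_range] at hb
      exact ⟨⟨b, hb.1⟩, by simp [hb.2], rfl⟩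
  · intro i
    refine ⟨c (i : ℕ), fun y hy => ?_⟩
    have := hTval (i : ℕ) i.isLt y hy.1 hy.2
    simpa using this
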